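/- Let x_1 < y_1 < x_2 < ⋯ < x_{d-1} < y_{d-1} < x_d be a pair of interlacing sequences with transition weights μ_k, center c and area A. Then the mean of the transition distribution is ∑_{k=1}^{d} x_k μ_k = c, and its variance is ∑_{k=1}^{d} x_k² μ_k − (∑_{k=1}^{d} x_k μ_k)² = A. -/

import Mathlib

/-- The transition weight
`μ_k = ∏_{i=1}^{k-1} (x_k−y_i)/(x_k−x_i) · ∏_{j=k+1}^{d} (x_k−y_{j-1})/(x_k−x_j)`. -/
noncomputable def muWeight (d : ℕ) (x y : ℕ → ℝ) (k : ℕ) : ℝ :=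
  (∏ i ∈ Finset.Icc 1 (k - 1), (x k - y i) / (x k - x i)) *
    ∏ j ∈ Finset.Icc (k + 1) d, (x k - y (j - 1)) / (x k - x j)

open Finset Polynomial

lemma keyL {s : Finset ℕ} {v : ℕ → ℝ} (hvs : Set.InjOn v ↑s) (f : Polynomial ℝ)
    (hf : f.degree < s.card) :
    ∑ i ∈ s, f.eval (v i) * Lagrange.nodalWeight s v i = f.coeff (s.card - 1) := by
  conv_rhs => rw [Lagrange.eq_interpolate hvs hf]
  rw [Lagrange.interpolate_apply, Polynomial.finset_sum_coeff]
  refine Finset.sum_congr rfl fun i hi => ?_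
  rw [Polynomial.coeff_C_mul]
  congr 1
  rw [Lagrange.basis_eq_prod_sub_inv_mul_nodal_div hi, ← Lagrange.nodal_erase_eq_nodal_div hi,
    Polynomial.coeff_C_mul]
  have h1 : (Lagrange.nodal (s.erase i) v).natDegree = s.card - 1 := by
    rw [Lagrange.natDegree_nodal, Finset.card_erase_of_mem hi]
  rw [show s.card - 1 = (Lagrange.nodal (s.erase i) v).natDegree from h1.symm,
    Polynomial.Monic.coeff_natDegree Lagrange.nodal_monic, mul_one]

lemma nodal_coeff_sub_one (v : ℕ → ℝ) (n : ℕ) (hn : 1 ≤ n) :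
    (Lagrange.nodal (Finset.Icc 1 n) v).coeff (n - 1) = -∑ i ∈ Finset.Icc 1 n, v i := by
  have hdeg : (Lagrange.nodal (Finset.Icc 1 n) v).natDegree = n := by
    rw [Lagrange.natDegree_nodal, Nat.card_Icc]; omega
  have := Polynomial.prod_X_sub_C_nextCoeff (s := Finset.Icc 1 n) v
  rwa [← Lagrange.nodal_eq, Polynomial.nextCoeff_of_natDegree_pos (by omega), hdeg] at this

lemma nodal_coeff_sub_two (v : ℕ → ℝ) (n : ℕ) (hn : 2 ≤ n) :
    (Lagrange.nodal (Finset.Icc 1 n) v).coeff (n - 2) =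
      ∑ i ∈ Finset.Icc 1 n, ∑ j ∈ Finset.Icc (i + 1) n, v i * v j := by
  induction n, hn using Nat.le_induction with
  | base =>
      have h2 : (Finset.Icc 1 2 : Finset ℕ) = {1, 2} := rfl
      rw [Lagrange.nodal, h2]
      simp [Polynomial.coeff_zero_eq_eval_zero, Finset.Icc_self,
        show (Finset.Icc 3 2 : Finset ℕ) = ∅ from rfl]
  | succ n hn ih =>
      have hins : (Finset.Icc 1 (n + 1) : Finset ℕ) = insert (n + 1) (Finset.Icc 1 n) := by
        ext m; simp [Finset.mem_Icc, Finset.mem_insert]; omega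
      have hprod : Lagrange.nodal (Finset.Icc 1 (n + 1)) v
          = (X - C (v (n + 1))) * Lagrange.nodal (Finset.Icc 1 n) v := by
        rw [hins, Lagrange.nodal_insert_eq_nodal (by simp)]
      have hco1 := nodal_coeff_sub_one v n (by omega)
      have hkey : (n + 1) - 2 = (n - 2) + 1 := by omega
      rw [hprod, sub_mul, Polynomial.coeff_sub, hkey, Polynomial.coeff_X_mul,
        Polynomial.coeff_C_mul, show (n - 2) + 1 = n - 1 by omega, ih, hco1]
      -- RHS: split top
      rw [Finset.sum_Icc_succ_top (by omega : 1 ≤ n + 1)]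
      have hempty : (Finset.Icc (n + 1 + 1) (n + 1) : Finset ℕ) = ∅ := by
        apply Finset.Icc_eq_empty; omega
      rw [hempty, Finset.sum_empty, add_zero]
      have hsplit : ∀ i ∈ Finset.Icc 1 n, ∑ j ∈ Finset.Icc (i + 1) (n + 1), v i * v j
          = (∑ j ∈ Finset.Icc (i + 1) n, v i * v j) + v i * v (n + 1) := by
        intro i hi
        rw [Finset.sum_Icc_succ_top]
        rw [Finset.mem_Icc] at hi; omega
      rw [Finset.sum_congr rfl hsplit, Finset.sum_add_distrib, ← Finset.sum_mul]
      ring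

lemma mu_eq (d : ℕ) (hd : 1 ≤ d) (x y : ℕ → ℝ) (k : ℕ) (hk : k ∈ Finset.Icc 1 d) :
    muWeight d x y k =
      (Lagrange.nodal (Finset.Icc 1 (d - 1)) y).eval (x k) *
        Lagrange.nodalWeight (Finset.Icc 1 d) x k := by
  rw [Finset.mem_Icc] at hk
  have claimA : (∏ i ∈ Finset.Icc 1 (k - 1), (x k - y i)) *
      ∏ j ∈ Finset.Icc (k + 1) d, (x k - y (j - 1)) =
      ∏ i ∈ Finset.Icc 1 (d - 1), (x k - y i) := by
    have hmap : (Finset.Icc (k + 1) d : Finset ℕ)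
        = (Finset.Icc k (d - 1)).map (addRightEmbedding 1) := by
      rw [Finset.map_add_right_Icc]
      congr 1 <;> omega
    rw [hmap, Finset.prod_map]
    simp only [addRightEmbedding_apply, Nat.add_sub_cancel]
    rw [show (Finset.Icc 1 (k - 1) : Finset ℕ) = Finset.Ioc 0 (k - 1) from
        (Finset.Icc_add_one_left_eq_Ioc 0 (k - 1)),
      show (Finset.Icc k (d - 1) : Finset ℕ) = Finset.Ioc (k - 1) (d - 1) by
        rw [← Finset.Icc_add_one_left_eq_Ioc]; congr 1; omega,
      Finset.prod_Ioc_consecutive _ (by omega) (by omega), 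
        show (Finset.Icc 1 (d - 1) : Finset ℕ) = Finset.Ioc 0 (d - 1) from Finset.Icc_add_one_left_eq_Ioc 0 (d - 1)]
  have claimB : (∏ i ∈ Finset.Icc 1 (k - 1), (x k - x i)⁻¹) *
      ∏ j ∈ Finset.Icc (k + 1) d, (x k - x j)⁻¹ =
      ∏ j ∈ (Finset.Icc 1 d).erase k, (x k - x j)⁻¹ := by
    have herase : ((Finset.Icc 1 d).erase k : Finset ℕ)
        = Finset.Icc 1 (k - 1) ∪ Finset.Icc (k + 1) d := by
      ext m; simp only [Finset.mem_erase, Finset.mem_Icc, Finset.mem_union]; omega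
    rw [herase, Finset.prod_union (by
      simp only [Finset.disjoint_left, Finset.mem_Icc]; omega)]
  rw [muWeight, Lagrange.eval_nodal, Lagrange.nodalWeight]
  simp only [div_eq_mul_inv, Finset.prod_mul_distrib]
  rw [← claimA, ← claimB]; ring

lemma final_sum (t : ℕ) (x y : ℕ → ℝ) :
    (∑ i ∈ Finset.Icc 1 t, ∑ j ∈ Finset.Icc (i + 1) t, y i * y j)
      - (∑ i ∈ Finset.Icc 1 (t + 1), ∑ j ∈ Finset.Icc (i + 1) (t + 1), x i * x j)
      + ((∑ i ∈ Finset.Icc 1 (t + 1), x i) - ∑ i ∈ Finset.Icc 1 t, y i)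
          * (∑ i ∈ Finset.Icc 1 t, y i)
    = ∑ i ∈ Finset.Icc 1 (t + 1), ∑ j ∈ Finset.Icc (i + 1) (t + 1),
        (y i - x i) * (x j - y (j - 1)) := by
  set d := t + 1 with hdd
  have reidx : ∀ (f : ℕ → ℝ) (i : ℕ),
      ∑ j ∈ Finset.Icc (i + 1) d, f (j - 1) = ∑ j ∈ Finset.Icc i t, f j := by
    intro f i
    rw [show (Finset.Icc (i + 1) d : Finset ℕ)
        = (Finset.Icc i t).map (addRightEmbedding 1) by
      rw [Finset.map_add_right_Icc], Finset.sum_map]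
    simp
  -- T1 : swap order
  have hT1 : ∑ i ∈ Finset.Icc 1 d, ∑ j ∈ Finset.Icc (i + 1) d, y i * x j
      = ∑ j ∈ Finset.Icc 1 d, (∑ i ∈ Finset.Icc 1 (j - 1), y i) * x j := by
    rw [Finset.sum_comm' (t' := Finset.Icc 1 d) (s' := fun j => Finset.Icc 1 (j - 1))
      (by intro i j; simp only [Finset.mem_Icc]; omega)]
    exact Finset.sum_congr rfl fun j _ => by rw [Finset.sum_mul]
  -- splitting of y-sum
  have hsplity : ∀ k ∈ Finset.Icc 1 d,
      (∑ i ∈ Finset.Icc 1 (k - 1), y i) + ∑ j ∈ Finset.Icc k t, y j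
        = ∑ i ∈ Finset.Icc 1 t, y i := by
    intro k hk
    rw [Finset.mem_Icc] at hk
    rw [show (Finset.Icc 1 (k - 1) : Finset ℕ) = Finset.Ioc 0 (k - 1) from
        Finset.Icc_add_one_left_eq_Ioc 0 (k - 1),
      show (Finset.Icc k t : Finset ℕ) = Finset.Ioc (k - 1) t by
        rw [← Finset.Icc_add_one_left_eq_Ioc]; congr 1; omega,
      Finset.sum_Ioc_consecutive _ (by omega) (by omega), 
        show (Finset.Icc 1 t : Finset ℕ) = Finset.Ioc 0 t from Finset.Icc_add_one_left_eq_Ioc 0 t]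
  -- T14
  have hT14 : ∑ i ∈ Finset.Icc 1 d, ∑ j ∈ Finset.Icc (i + 1) d,
        (y i * x j + x i * y (j - 1))
      = (∑ i ∈ Finset.Icc 1 d, x i) * ∑ i ∈ Finset.Icc 1 t, y i := by
    simp only [Finset.sum_add_distrib]
    rw [hT1]
    have : ∀ i ∈ Finset.Icc 1 d, ∑ j ∈ Finset.Icc (i + 1) d, x i * y (j - 1)
        = x i * ∑ j ∈ Finset.Icc i t, y j := by
      intro i _
      rw [reidx (fun j => x i * y j) i, Finset.mul_sum]
    rw [Finset.sum_congr rfl this, ← Finset.sum_add_distrib, Finset.sum_mul]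
    refine Finset.sum_congr rfl fun k hk => ?_
    rw [← hsplity k hk]; ring
  -- T2
  have hT2 : ∑ i ∈ Finset.Icc 1 d, ∑ j ∈ Finset.Icc (i + 1) d, y i * y (j - 1)
      = (∑ i ∈ Finset.Icc 1 t, y i ^ 2)
        + ∑ i ∈ Finset.Icc 1 t, ∑ j ∈ Finset.Icc (i + 1) t, y i * y j := by
    have : ∀ i ∈ Finset.Icc 1 d, ∑ j ∈ Finset.Icc (i + 1) d, y i * y (j - 1)
        = ∑ j ∈ Finset.Icc i t, y i * y j := fun i _ => reidx (fun j => y i * y j) i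
    rw [Finset.sum_congr rfl this, hdd, Finset.sum_Icc_succ_top (by omega : 1 ≤ t + 1),
      show (Finset.Icc (t + 1) t : Finset ℕ) = ∅ from Finset.Icc_eq_empty (by omega),
      Finset.sum_empty, add_zero]
    rw [← Finset.sum_add_distrib]
    refine Finset.sum_congr rfl fun i hi => ?_
    rw [Finset.mem_Icc] at hi
    rw [Finset.Icc_eq_cons_Ioc hi.2, Finset.sum_cons, Finset.Icc_add_one_left_eq_Ioc]
    ring
  -- square of y-sum
  have hSq : (∑ i ∈ Finset.Icc 1 t, y i) ^ 2
      = (∑ i ∈ Finset.Icc 1 t, y i ^ 2)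
        + 2 * ∑ i ∈ Finset.Icc 1 t, ∑ j ∈ Finset.Icc (i + 1) t, y i * y j := by
    rw [sq, Finset.sum_mul_sum]
    have hsplit : ∀ i ∈ Finset.Icc 1 t, ∑ j ∈ Finset.Icc 1 t, y i * y j
        = (∑ j ∈ Finset.Icc 1 (i - 1), y i * y j) + y i * y i
          + ∑ j ∈ Finset.Icc (i + 1) t, y i * y j := by
      intro i hi
      rw [Finset.mem_Icc] at hi
      rw [show (Finset.Icc 1 t : Finset ℕ) = Finset.Ioc 0 t from Finset.Icc_add_one_left_eq_Ioc 0 t,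
        ← Finset.sum_Ioc_consecutive (fun j => y i * y j)
          (by omega : (0:ℕ) ≤ i - 1) (by omega : i - 1 ≤ t),
        ← Finset.Icc_add_one_left_eq_Ioc, ← Finset.Icc_add_one_left_eq_Ioc]
      simp only [Nat.succ_eq_add_one, Nat.zero_add, show i - 1 + 1 = i by omega]
      rw [Finset.Icc_eq_cons_Ioc (by omega : i ≤ t), Finset.sum_cons,
        show (Finset.Icc (i + 1) t : Finset ℕ) = Finset.Ioc i t from Finset.Icc_add_one_left_eq_Ioc i t]
      ring
    rw [Finset.sum_congr rfl hsplit]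
    simp only [Finset.sum_add_distrib]
    have hswap : ∑ i ∈ Finset.Icc 1 t, ∑ j ∈ Finset.Icc 1 (i - 1), y i * y j
        = ∑ i ∈ Finset.Icc 1 t, ∑ j ∈ Finset.Icc (i + 1) t, y i * y j := by
      rw [Finset.sum_comm' (t' := Finset.Icc 1 t) (s' := fun j => Finset.Icc (j + 1) t)
        (by intro i j; simp only [Finset.mem_Icc]; omega)]
      exact Finset.sum_congr rfl fun j _ => Finset.sum_congr rfl fun i _ => mul_comm _ _
    rw [hswap]
    have : ∀ i ∈ Finset.Icc 1 t, y i * y i = y i ^ 2 := fun i _ => (sq (y i)).symm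
    rw [Finset.sum_congr rfl this]
    ring
  -- assemble
  have hexp : ∀ i ∈ Finset.Icc 1 d, ∀ j ∈ Finset.Icc (i + 1) d,
      (y i - x i) * (x j - y (j - 1))
        = (y i * x j + x i * y (j - 1)) - y i * y (j - 1) - x i * x j := by
    intro i _ j _; ring
  calc (∑ i ∈ Finset.Icc 1 t, ∑ j ∈ Finset.Icc (i + 1) t, y i * y j)
      - (∑ i ∈ Finset.Icc 1 d, ∑ j ∈ Finset.Icc (i + 1) d, x i * x j)
      + ((∑ i ∈ Finset.Icc 1 d, x i) - ∑ i ∈ Finset.Icc 1 t, y i)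
          * (∑ i ∈ Finset.Icc 1 t, y i)
      = (∑ i ∈ Finset.Icc 1 d, ∑ j ∈ Finset.Icc (i + 1) d,
          (y i * x j + x i * y (j - 1)))
        - (∑ i ∈ Finset.Icc 1 d, ∑ j ∈ Finset.Icc (i + 1) d, y i * y (j - 1))
        - ∑ i ∈ Finset.Icc 1 d, ∑ j ∈ Finset.Icc (i + 1) d, x i * x j := by
        rw [hT14, hT2]; nlinarith [hSq]
    _ = ∑ i ∈ Finset.Icc 1 d, ∑ j ∈ Finset.Icc (i + 1) d,
          (y i - x i) * (x j - y (j - 1)) := by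
        rw [← Finset.sum_sub_distrib, ← Finset.sum_sub_distrib]
        refine Finset.sum_congr rfl fun i hi => ?_
        rw [← Finset.sum_sub_distrib, ← Finset.sum_sub_distrib]
        exact Finset.sum_congr rfl fun j hj => (hexp i hi j hj).symm

/-- For interlacing sequences `x₁ < y₁ < x₂ < ⋯ < x_{d−1} < y_{d−1} < x_d` with transition
weights `μ_k`, center `c = ∑ x_k − ∑ y_k` and area `A = ∑_{i<j} (y_i−x_i)(x_j−y_{j-1})`:
the mean of the transition distribution is `∑ x_k μ_k = c` and its variance is
`∑ x_k² μ_k − (∑ x_k μ_k)² = A`. -/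
theorem transition_mean_and_variance (d : ℕ) (hd : 1 ≤ d) (x y : ℕ → ℝ)
    (hinter : ∀ m, 1 ≤ m → m ≤ d - 1 → x m < y m ∧ y m < x (m + 1)) :
    (∑ k ∈ Finset.Icc 1 d, x k * muWeight d x y k =
        ∑ k ∈ Finset.Icc 1 d, x k - ∑ k ∈ Finset.Icc 1 (d - 1), y k) ∧
    (∑ k ∈ Finset.Icc 1 d, x k ^ 2 * muWeight d x y k -
        (∑ k ∈ Finset.Icc 1 d, x k * muWeight d x y k) ^ 2 =
      ∑ i ∈ Finset.Icc 1 d, ∑ j ∈ Finset.Icc (i + 1) d, (y i - x i) * (x j - y (j - 1))) := by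
  rcases eq_or_lt_of_le hd with h1 | h2
  · -- d = 1
    subst h1
    have hmu1 : muWeight 1 x y 1 = 1 := by
      simp [muWeight]
    simp [hmu1, show (Finset.Icc 2 1 : Finset ℕ) = ∅ from rfl]
  · -- d ≥ 2
    obtain ⟨t, rfl⟩ : ∃ t, d = t + 1 := ⟨d - 1, by omega⟩
    have ht : 1 ≤ t := by omega
    simp only [Nat.add_sub_cancel] at hinter ⊢
    -- strict monotonicity and injectivity
    have hstep : ∀ m, 1 ≤ m → m ≤ t → x m < x (m + 1) := fun m h1 h2 =>
      (hinter m h1 h2).1.trans (hinter m h1 h2).2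
    have hmono : ∀ i j, 1 ≤ i → i < j → j ≤ t + 1 → x i < x j := by
      intro i j h1 hij
      induction j with
      | zero => omega
      | succ j ih =>
          intro hjd
          rcases Nat.lt_or_ge i j with hij' | hij'
          · exact (ih hij' (by omega)).trans (hstep j (by omega) (by omega))
          · have : i = j := by omega
            subst this
            exact hstep i h1 (by omega)
    have hinj : Set.InjOn x ↑(Finset.Icc 1 (t + 1)) := by
      intro a ha b hb hab
      simp only [Finset.coe_Icc, Set.mem_Icc] at ha hb
      by_contra hne
      rcases Nat.lt_or_ge a b with h | h
      · exact absurd hab (ne_of_lt (hmono a b ha.1 h hb.2))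
      · have h' : b < a := by omega
        exact absurd hab.symm (ne_of_lt (hmono b a hb.1 h' ha.2))
    have hcard : (Finset.Icc 1 (t + 1)).card = t + 1 := by rw [Nat.card_Icc]; omega
    set Q : Polynomial ℝ := Lagrange.nodal (Finset.Icc 1 t) y with hQdef
    set P : Polynomial ℝ := Lagrange.nodal (Finset.Icc 1 (t + 1)) x with hPdef
    set c : ℝ := (∑ k ∈ Finset.Icc 1 (t + 1), x k) - ∑ k ∈ Finset.Icc 1 t, y k with hcdef
    set W : ℕ → ℝ := fun k => Lagrange.nodalWeight (Finset.Icc 1 (t + 1)) x k with hWdef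
    have hQdeg : Q.natDegree = t := by
      rw [hQdef, Lagrange.natDegree_nodal, Nat.card_Icc]; omega
    have hQne : Q ≠ 0 := Lagrange.nodal_ne_zero
    have hQdegree : Q.degree = (t : WithBot ℕ) := by
      rw [Polynomial.degree_eq_natDegree hQne, hQdeg]
    have hPdeg : P.natDegree = t + 1 := by
      rw [hPdef, Lagrange.natDegree_nodal, Nat.card_Icc]; omega
    have hPmonic : P.Monic := Lagrange.nodal_monic
    have hQmonic : Q.Monic := Lagrange.nodal_monic
    have hkey : ∀ f : Polynomial ℝ, f.degree < ((t + 1 : ℕ) : WithBot ℕ) →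
        ∑ k ∈ Finset.Icc 1 (t + 1), f.eval (x k) * W k = f.coeff t := by
      intro f hf
      have := keyL hinj f (by rw [hcard]; exact_mod_cast hf)
      rwa [hcard, Nat.add_sub_cancel] at this
    have hmu : ∀ k ∈ Finset.Icc 1 (t + 1), muWeight (t + 1) x y k = Q.eval (x k) * W k := by
      intro k hk
      have := mu_eq (t + 1) (by omega) x y k hk
      rwa [Nat.add_sub_cancel] at this
    have hPeval : ∀ k ∈ Finset.Icc 1 (t + 1), P.eval (x k) = 0 := fun k hk =>
      Lagrange.eval_nodal_at_node hk
    -- coefficients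
    have hPc1 : P.coeff t = -∑ i ∈ Finset.Icc 1 (t + 1), x i := by
      have := nodal_coeff_sub_one x (t + 1) (by omega)
      rwa [Nat.add_sub_cancel] at this
    have hQc1 : Q.coeff (t - 1) = -∑ i ∈ Finset.Icc 1 t, y i :=
      nodal_coeff_sub_one y t ht
    have hQct : Q.coeff t = 1 := by
      rw [← hQdeg]; exact hQmonic.coeff_natDegree
    have hPc2 : P.coeff (t - 1) =
        ∑ i ∈ Finset.Icc 1 (t + 1), ∑ j ∈ Finset.Icc (i + 1) (t + 1), x i * x j := by
      have := nodal_coeff_sub_two x (t + 1) (by omega)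
      rwa [show t + 1 - 2 = t - 1 by omega] at this
    have hXQt : (X * Q).coeff t = Q.coeff (t - 1) := by
      have h := Polynomial.coeff_X_mul Q (t - 1)
      rwa [show t - 1 + 1 = t by omega] at h
    have hXQt1 : (X * Q).coeff (t - 1) =
        ∑ i ∈ Finset.Icc 1 t, ∑ j ∈ Finset.Icc (i + 1) t, y i * y j := by
      rcases eq_or_lt_of_le ht with h1 | h2
      · subst h1
        simp [Polynomial.mul_coeff_zero, show (Finset.Icc 2 1 : Finset ℕ) = ∅ from rfl]
      · rw [show t - 1 = (t - 2) + 1 by omega, Polynomial.coeff_X_mul,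
          nodal_coeff_sub_two y t (by omega)]
    -- degree facts
    have hXQmonic : (X * Q).Monic := Polynomial.monic_X.mul hQmonic
    have hXQdeg : (X * Q).natDegree = t + 1 := by
      rw [Polynomial.natDegree_mul Polynomial.X_ne_zero hQne, Polynomial.natDegree_X, hQdeg,
        add_comm]
    have hf1deg : (X * Q - P).degree < ((t + 1 : ℕ) : WithBot ℕ) := by
      have h := Polynomial.degree_sub_lt (p := X * Q) (q := P)
        (by rw [Polynomial.degree_eq_natDegree hXQmonic.ne_zero,
          Polynomial.degree_eq_natDegree hPmonic.ne_zero, hXQdeg, hPdeg])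
        hXQmonic.ne_zero
        (by rw [hXQmonic.leadingCoeff, hPmonic.leadingCoeff])
      rwa [Polynomial.degree_eq_natDegree hXQmonic.ne_zero, hXQdeg] at h
    -- the mean
    have hf1coeff : (X * Q - P).coeff t = c := by
      rw [Polynomial.coeff_sub, hXQt, hQc1, hPc1, hcdef]; ring
    have hmean : ∑ k ∈ Finset.Icc 1 (t + 1), x k * muWeight (t + 1) x y k = c := by
      have hsum : ∑ k ∈ Finset.Icc 1 (t + 1), x k * muWeight (t + 1) x y k
          = ∑ k ∈ Finset.Icc 1 (t + 1), (X * Q - P).eval (x k) * W k := by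
        refine Finset.sum_congr rfl fun k hk => ?_
        rw [hmu k hk, Polynomial.eval_sub, Polynomial.eval_mul, Polynomial.eval_X,
          hPeval k hk]
        ring
      rw [hsum, hkey _ hf1deg, hf1coeff]
    -- G and its coefficients
    set G : Polynomial ℝ := X * Q - P - Polynomial.C c * Q with hGdef
    have hGco : ∀ m, t ≤ m → G.coeff m = 0 := by
      intro m hm
      rcases eq_or_lt_of_le hm with h1 | h2
      · rw [hGdef, Polynomial.coeff_sub, ← h1, hf1coeff, Polynomial.coeff_C_mul, hQct]
        ring
      · have hf1z : (X * Q - P).coeff m = 0 :=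
          Polynomial.coeff_eq_zero_of_degree_lt
            (lt_of_lt_of_le hf1deg (by exact_mod_cast (by omega : t + 1 ≤ m)))
        have hQz : Q.coeff m = 0 :=
          Polynomial.coeff_eq_zero_of_degree_lt
            (by rw [hQdegree]; exact_mod_cast (by omega : t < m))
        rw [hGdef, Polynomial.coeff_sub, hf1z, Polynomial.coeff_C_mul, hQz]
        ring
    have hGdeg : G.degree < ((t : ℕ) : WithBot ℕ) :=
      (Polynomial.degree_lt_iff_coeff_zero _ _).mpr fun m hm => hGco m (by exact_mod_cast hm)
    -- H = (X + C c) * G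
    have hHdeg : ((X + Polynomial.C c) * G).degree < ((t + 1 : ℕ) : WithBot ℕ) := by
      refine (Polynomial.degree_lt_iff_coeff_zero _ _).mpr fun m hm => ?_
      have hm' : (t + 1 : ℕ) ≤ m := by exact_mod_cast hm
      have hxg : (X * G).coeff m = G.coeff (m - 1) := by
        have h := Polynomial.coeff_X_mul G (m - 1)
        rwa [show m - 1 + 1 = m by omega] at h
      rw [add_mul, Polynomial.coeff_add, Polynomial.coeff_C_mul, hxg,
        hGco (m - 1) (by omega), hGco m (by omega)]
      ring
    have hHcoeff : ((X + Polynomial.C c) * G).coeff t =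
        (∑ i ∈ Finset.Icc 1 t, ∑ j ∈ Finset.Icc (i + 1) t, y i * y j)
          - (∑ i ∈ Finset.Icc 1 (t + 1), ∑ j ∈ Finset.Icc (i + 1) (t + 1), x i * x j)
          + c * ∑ i ∈ Finset.Icc 1 t, y i := by
      have hxg : (X * G).coeff t = G.coeff (t - 1) := by
        have h := Polynomial.coeff_X_mul G (t - 1)
        rwa [show t - 1 + 1 = t by omega] at h
      rw [add_mul, Polynomial.coeff_add, Polynomial.coeff_C_mul, hxg, hGco t le_rfl]
      rw [hGdef, Polynomial.coeff_sub, Polynomial.coeff_sub, Polynomial.coeff_C_mul,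
        hXQt1, hPc2, hQc1]
      ring
    -- M0 = 1
    have hM0 : ∑ k ∈ Finset.Icc 1 (t + 1), Q.eval (x k) * W k = 1 := by
      have := hkey Q (by rw [hQdegree]; exact_mod_cast (by omega : t < t + 1))
      rwa [hQct] at this
    -- variance sum
    have hvar : ∑ k ∈ Finset.Icc 1 (t + 1), x k ^ 2 * muWeight (t + 1) x y k - c ^ 2
        = ((X + Polynomial.C c) * G).coeff t := by
      have hsum : ∑ k ∈ Finset.Icc 1 (t + 1), ((X + Polynomial.C c) * G).eval (x k) * W k
          = ∑ k ∈ Finset.Icc 1 (t + 1),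
              (x k ^ 2 * (Q.eval (x k) * W k) - c ^ 2 * (Q.eval (x k) * W k)) := by
        refine Finset.sum_congr rfl fun k hk => ?_
        rw [hGdef]
        simp only [Polynomial.eval_mul, Polynomial.eval_add, Polynomial.eval_sub,
          Polynomial.eval_X, Polynomial.eval_C, hPeval k hk]
        ring
      have h2 := hkey _ hHdeg
      rw [hsum] at h2
      rw [Finset.sum_sub_distrib, ← Finset.mul_sum, hM0] at h2
      have h3 : ∑ k ∈ Finset.Icc 1 (t + 1), x k ^ 2 * muWeight (t + 1) x y k
          = ∑ k ∈ Finset.Icc 1 (t + 1), x k ^ 2 * (Q.eval (x k) * W k) :=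
        Finset.sum_congr rfl fun k hk => by rw [hmu k hk]
      rw [h3]; linarith [h2]
    constructor
    · exact hmean
    · rw [hmean, hvar, hHcoeff, ← final_sum t x y, hcdef]
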